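/- Let H be a complex Hilbert space, (Ω, μ) a measure space, and A, B : Ω → B(H) strongly measurable functions such that t ↦ A(t)* A(t) and t ↦ B(t)* B(t) are Bochner integrable. Let X ∈ B(H) and assume t ↦ A(t)* X B(t) is Bochner integrable. Then ‖∫_Ω A(t)* X B(t) dμ(t)‖ ≤ ‖∫_Ω A(t)* A(t) dμ(t)‖^{1/2} · ‖∫_Ω B(t)* B(t) dμ(t)‖^{1/2} · ‖X‖. -/

import Mathlib

open ContinuousLinearMap MeasureTheory
open scoped InnerProductSpace ENNReal

section Aux

variable {H : Type*} [NormedAddCommGroup H] [InnerProductSpace ℂ H] [CompleteSpace H]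
    {Ω : Type*} [MeasurableSpace Ω] {μ : Measure Ω}

private lemma aux_ptwise (A : Ω → H →L[ℂ] H) (y : H) (t : Ω) :
    (‖A t y‖ ^ 2 : ℝ) = RCLike.re (⟪y, (adjoint (A t) * A t) y⟫_ℂ) := by
  rw [ContinuousLinearMap.mul_apply, adjoint_inner_right]
  exact (inner_self_eq_norm_sq _).symm

private lemma aux_int (A : Ω → H →L[ℂ] H)
    (hAA : Integrable (fun t => adjoint (A t) * A t) μ) (y : H) :
    Integrable (fun t => ‖A t y‖ ^ 2) μ := by
  have h1 : Integrable (fun t => ⟪y, (adjoint (A t) * A t) y⟫_ℂ) μ :=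
    Integrable.const_inner y (hAA.apply_continuousLinearMap y)
  simpa only [aux_ptwise] using h1.re

private lemma aux_mem (A : Ω → H →L[ℂ] H) (hA : StronglyMeasurable A)
    (hAA : Integrable (fun t => adjoint (A t) * A t) μ) (y : H) :
    MemLp (fun t => ‖A t y‖) 2 μ := by
  refine (memLp_two_iff_integrable_sq ?_).2 ?_
  · exact (StronglyMeasurable.apply_continuousLinearMap hA y).norm.aestronglyMeasurable
  · exact aux_int A hAA y

private lemma aux_bound (A : Ω → H →L[ℂ] H)
    (hAA : Integrable (fun t => adjoint (A t) * A t) μ) (y : H) :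
    ∫ t, ‖A t y‖ ^ 2 ∂μ ≤ ‖∫ t, adjoint (A t) * A t ∂μ‖ * ‖y‖ ^ 2 := by
  have h1 : Integrable (fun t => ⟪y, (adjoint (A t) * A t) y⟫_ℂ) μ :=
    Integrable.const_inner y (hAA.apply_continuousLinearMap y)
  have h2 : ∫ t, ‖A t y‖ ^ 2 ∂μ
      = RCLike.re (⟪y, (∫ t, adjoint (A t) * A t ∂μ) y⟫_ℂ) := by
    rw [ContinuousLinearMap.integral_apply hAA,
      ← integral_inner (hAA.apply_continuousLinearMap y) y, ← integral_re h1]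
    exact integral_congr_ae (Filter.Eventually.of_forall fun t => aux_ptwise A y t)
  rw [h2]
  calc RCLike.re (⟪y, (∫ t, adjoint (A t) * A t ∂μ) y⟫_ℂ)
      ≤ ‖⟪y, (∫ t, adjoint (A t) * A t ∂μ) y⟫_ℂ‖ := RCLike.re_le_norm _
    _ ≤ ‖y‖ * ‖(∫ t, adjoint (A t) * A t ∂μ) y‖ := norm_inner_le_norm _ _
    _ ≤ ‖y‖ * (‖∫ t, adjoint (A t) * A t ∂μ‖ * ‖y‖) := by
        gcongr; exact le_opNorm _ _
    _ = ‖∫ t, adjoint (A t) * A t ∂μ‖ * ‖y‖ ^ 2 := by ring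

end Aux

/-- Cauchy–Schwarz type inequality for inner product type integral transformers:
`‖∫ A(t)* X B(t) dμ‖ ≤ ‖∫ A(t)* A(t) dμ‖^{1/2} ‖∫ B(t)* B(t) dμ‖^{1/2} ‖X‖`. -/
theorem norm_integral_adjoint_mul_le
    {H : Type*} [NormedAddCommGroup H] [InnerProductSpace ℂ H] [CompleteSpace H]
    {Ω : Type*} [MeasurableSpace Ω] (μ : Measure Ω)
    (A B : Ω → H →L[ℂ] H)
    (hA : StronglyMeasurable A) (hB : StronglyMeasurable B)
    (hAA : Integrable (fun t => adjoint (A t) * A t) μ)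
    (hBB : Integrable (fun t => adjoint (B t) * B t) μ)
    (X : H →L[ℂ] H)
    (hAXB : Integrable (fun t => adjoint (A t) * X * B t) μ) :
    ‖∫ t, adjoint (A t) * X * B t ∂μ‖ ≤
      Real.sqrt ‖∫ t, adjoint (A t) * A t ∂μ‖ *
        Real.sqrt ‖∫ t, adjoint (B t) * B t ∂μ‖ * ‖X‖ := by
  set a := ‖∫ t, adjoint (A t) * A t ∂μ‖ with ha_def
  set b := ‖∫ t, adjoint (B t) * B t ∂μ‖ with hb_def
  have ha0 : 0 ≤ a := norm_nonneg _
  have hb0 : 0 ≤ b := norm_nonneg _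
  set C := Real.sqrt a * Real.sqrt b * ‖X‖ with hC_def
  have hC0 : 0 ≤ C := by positivity
  set T := ∫ t, adjoint (A t) * X * B t ∂μ with hT_def
  have key : ∀ x y : H, ‖⟪y, T x⟫_ℂ‖ ≤ C * ‖x‖ * ‖y‖ := by
    intro x y
    rw [hT_def, ContinuousLinearMap.integral_apply hAXB,
      ← integral_inner (hAXB.apply_continuousLinearMap x) y]
    have ptw : ∀ t, ‖⟪y, (adjoint (A t) * X * B t) x⟫_ℂ‖ ≤ ‖X‖ * (‖A t y‖ * ‖B t x‖) := by
      intro t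
      have he : ⟪y, (adjoint (A t) * X * B t) x⟫_ℂ = ⟪A t y, X (B t x)⟫_ℂ := by
        simp only [ContinuousLinearMap.mul_apply, adjoint_inner_right]
      rw [he]
      calc ‖⟪A t y, X (B t x)⟫_ℂ‖ ≤ ‖A t y‖ * ‖X (B t x)‖ := norm_inner_le_norm _ _
        _ ≤ ‖A t y‖ * (‖X‖ * ‖B t x‖) := by gcongr; exact le_opNorm _ _
        _ = ‖X‖ * (‖A t y‖ * ‖B t x‖) := by ring
    have hmemA : MemLp (fun t => ‖A t y‖) 2 μ := aux_mem A hA hAA y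
    have hmemB : MemLp (fun t => ‖B t x‖) 2 μ := aux_mem B hB hBB x
    have hprod : Integrable (fun t => ‖A t y‖ * ‖B t x‖) μ := by
      have h12 : (1 : ℝ≥0∞) / 1 = 1 / 2 + 1 / 2 := by
        rw [one_div_one, ENNReal.add_halves]
      have := hmemB.smul (r := 1) hmemA (hpqr := ⟨by rw [inv_one, ENNReal.inv_two_add_inv_two]⟩)
      rw [memLp_one_iff_integrable] at this
      exact this
    have hCS : ∫ t, ‖A t y‖ * ‖B t x‖ ∂μ
        ≤ Real.sqrt (∫ t, ‖A t y‖ ^ 2 ∂μ) * Real.sqrt (∫ t, ‖B t x‖ ^ 2 ∂μ) := by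
      have hconj : Real.HolderConjugate 2 2 := Real.HolderConjugate.two_two
      have h2 : ENNReal.ofReal (2 : ℝ) = 2 := by
        simp [ENNReal.ofReal_ofNat]
      have := integral_mul_le_Lp_mul_Lq_of_nonneg hconj
        (Filter.Eventually.of_forall fun t => norm_nonneg (A t y))
        (Filter.Eventually.of_forall fun t => norm_nonneg (B t x))
        (h2 ▸ hmemA) (h2 ▸ hmemB)
      have hr : ∀ f : Ω → ℝ, (∫ t, f t ^ (2 : ℝ) ∂μ) ^ ((1 : ℝ) / 2)
          = Real.sqrt (∫ t, f t ^ 2 ∂μ) := by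
        intro f
        rw [Real.sqrt_eq_rpow]
        congr 1
        refine integral_congr_ae (Filter.Eventually.of_forall fun t => ?_)
        show f t ^ (2 : ℝ) = f t ^ 2
        rw [← Real.rpow_natCast (f t) 2]
        norm_num
      rw [hr (fun t => ‖A t y‖), hr (fun t => ‖B t x‖)] at this
      exact this
    calc ‖∫ t, ⟪y, (adjoint (A t) * X * B t) x⟫_ℂ ∂μ‖
        ≤ ∫ t, ‖⟪y, (adjoint (A t) * X * B t) x⟫_ℂ‖ ∂μ := norm_integral_le_integral_norm _
      _ ≤ ∫ t, ‖X‖ * (‖A t y‖ * ‖B t x‖) ∂μ :=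
          integral_mono_of_nonneg (Filter.Eventually.of_forall fun t => norm_nonneg _)
            (hprod.const_mul _) (Filter.Eventually.of_forall ptw)
      _ = ‖X‖ * ∫ t, ‖A t y‖ * ‖B t x‖ ∂μ := integral_const_mul _ _
      _ ≤ ‖X‖ * (Real.sqrt (∫ t, ‖A t y‖ ^ 2 ∂μ) * Real.sqrt (∫ t, ‖B t x‖ ^ 2 ∂μ)) := by
          have h1 : (0 : ℝ) ≤ ∫ t, ‖A t y‖ * ‖B t x‖ ∂μ := by
            positivity
          gcongr
      _ ≤ ‖X‖ * (Real.sqrt (a * ‖y‖ ^ 2) * Real.sqrt (b * ‖x‖ ^ 2)) := by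
          gcongr
          · exact aux_bound A hAA y
          · exact aux_bound B hBB x
      _ = C * ‖x‖ * ‖y‖ := by
          rw [Real.sqrt_mul ha0, Real.sqrt_mul hb0,
            Real.sqrt_sq (norm_nonneg y), Real.sqrt_sq (norm_nonneg x)]
          ring
  refine opNorm_le_bound T hC0 fun x => ?_
  rcases eq_or_lt_of_le (norm_nonneg (T x)) with h0 | h0
  · rw [← h0]; positivity
  · have h := key x (T x)
    have hsq : ‖⟪T x, T x⟫_ℂ‖ = ‖T x‖ ^ 2 := by
      rw [inner_self_eq_norm_sq_to_K]
      simp [norm_pow]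
    rw [hsq] at h
    have : ‖T x‖ * ‖T x‖ ≤ C * ‖x‖ * ‖T x‖ := by nlinarith
    exact le_of_mul_le_mul_right this h0
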